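/- Let m be a positive even integer. The quotient of (ℂ²∖{0}) × (ℂᵐ∖{0}) by the diagonal ℂ*-action a·(v, x) = (a⁻¹v, a x) is homeomorphic to ℙ¹(ℂ) × (ℂᵐ∖{0}). -/

import Mathlib

/-- The nonzero vectors of `ℂᵏ`, with the subspace topology. -/
abbrev NZ (k : ℕ) : Type := {v : Fin k → ℂ // v ≠ 0}

/-- The orbit relation of the diagonal `ℂ*`-action `a • (v, x) = (a⁻¹ v, a x)` on
`(ℂ² ∖ {0}) × (ℂᵐ ∖ {0})`. -/
def diagRel (m : ℕ) : (NZ 2 × NZ m) → (NZ 2 × NZ m) → Prop := fun p q =>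
  ∃ a : ℂˣ, (q.1 : Fin 2 → ℂ) = ((a⁻¹ : ℂˣ) : ℂ) • (p.1 : Fin 2 → ℂ) ∧
    (q.2 : Fin m → ℂ) = (a : ℂ) • (p.2 : Fin m → ℂ)

noncomputable instance (K V : Type*) [DivisionRing K] [AddCommGroup V] [Module K V]
    [TopologicalSpace V] : TopologicalSpace (Projectivization K V) :=
  inferInstanceAs (TopologicalSpace (Quotient (projectivizationSetoid K V)))

section Aux

open Complex

local notation "conj'" => (starRingEnd ℂ)

/-- Pair index: flips the last bit (within even `m`). -/
def pr (m : ℕ) (i : Fin m) : Fin m :=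
  if h : (if i.val % 2 = 0 then i.val + 1 else i.val - 1) < m then ⟨_, h⟩ else i

lemma pr_val {m : ℕ} (hme : Even m) (i : Fin m) :
    (pr m i).val = if i.val % 2 = 0 then i.val + 1 else i.val - 1 := by
  obtain ⟨k, hk⟩ := hme
  have hi := i.isLt
  rw [pr, dif_pos (by split_ifs with h <;> omega)]

lemma pr_pr {m : ℕ} (hme : Even m) (i : Fin m) : pr m (pr m i) = i := by
  have h1 := pr_val hme i
  have h2 := pr_val hme (pr m i)
  have hi := i.isLt
  obtain ⟨k, hk⟩ := hme
  apply Fin.ext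
  rw [h2, h1]
  split_ifs at * <;> omega

lemma pr_parity {m : ℕ} (hme : Even m) (i : Fin m) :
    ((pr m i).val % 2 = 0) ↔ ¬ (i.val % 2 = 0) := by
  rw [pr_val hme]
  have hi := i.isLt
  split_ifs with h <;> omega

/-- Quaternionic-multiplication map, blockwise on pairs of coordinates. -/
def Gm (m : ℕ) (v : Fin 2 → ℂ) (x : Fin m → ℂ) : Fin m → ℂ := fun i =>
  if i.val % 2 = 0 then v 0 * x i + conj' (v 1) * conj' (x (pr m i))
  else v 0 * x i - conj' (v 1) * conj' (x (pr m i))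

lemma Gm_apply_even {m : ℕ} {v : Fin 2 → ℂ} {x : Fin m → ℂ} {i : Fin m}
    (h : i.val % 2 = 0) :
    Gm m v x i = v 0 * x i + conj' (v 1) * conj' (x (pr m i)) := if_pos h

lemma Gm_apply_odd {m : ℕ} {v : Fin 2 → ℂ} {x : Fin m → ℂ} {i : Fin m}
    (h : ¬ i.val % 2 = 0) :
    Gm m v x i = v 0 * x i - conj' (v 1) * conj' (x (pr m i)) := if_neg h

/-- Quaternionic "conjugate" vector. -/
def Hvec (v : Fin 2 → ℂ) : Fin 2 → ℂ := ![conj' (v 0), -(v 1)]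

lemma Hvec_Hvec (v : Fin 2 → ℂ) : Hvec (Hvec v) = v := by
  funext i
  fin_cases i <;> simp [Hvec]

/-- The squared norm, as a complex number. -/
def Nv (v : Fin 2 → ℂ) : ℂ := v 0 * conj' (v 0) + v 1 * conj' (v 1)

lemma Nv_eq (v : Fin 2 → ℂ) :
    Nv v = ((normSq (v 0) + normSq (v 1) : ℝ) : ℂ) := by
  simp [Nv, Complex.mul_conj]

lemma Nv_Hvec (v : Fin 2 → ℂ) : Nv (Hvec v) = Nv v := by
  simp [Nv, Hvec]
  ring

lemma Nv_conj (v : Fin 2 → ℂ) : conj' (Nv v) = Nv v := by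
  rw [Nv_eq, Complex.conj_ofReal]

lemma Nv_ne_zero {v : Fin 2 → ℂ} (hv : v ≠ 0) : Nv v ≠ 0 := by
  rw [Nv_eq]
  rw [ne_eq, Complex.ofReal_eq_zero]
  intro h
  apply hv
  have h0 : normSq (v 0) = 0 ∧ normSq (v 1) = 0 := by
    constructor <;> nlinarith [normSq_nonneg (v 0), normSq_nonneg (v 1)]
  funext i
  fin_cases i <;>
    simp only [Complex.normSq_eq_zero] at h0 <;> simp [h0.1, h0.2]

lemma Hvec_ne_zero {v : Fin 2 → ℂ} (hv : v ≠ 0) : Hvec v ≠ 0 := by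
  intro h
  apply hv
  have h0 := congrFun h 0
  have h1 := congrFun h 1
  simp [Hvec] at h0 h1
  funext i
  fin_cases i <;> simp [h0, h1]

lemma Gm_Hvec_Gm {m : ℕ} (hme : Even m) (v : Fin 2 → ℂ) (x : Fin m → ℂ) :
    Gm m (Hvec v) (Gm m v x) = Nv v • x := by
  funext i
  by_cases h : i.val % 2 = 0
  · have h1 : ¬ ((pr m i).val % 2 = 0) := by rw [pr_parity hme]; exact fun h' => h' h
    rw [Gm_apply_even h, Gm_apply_even h, Gm_apply_odd h1, pr_pr hme]
    simp only [Hvec, Matrix.cons_val_zero, Matrix.cons_val_one, Matrix.head_cons,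
      map_add, map_sub, map_mul, map_neg, Complex.conj_conj, Pi.smul_apply,
      smul_eq_mul, Nv]
    ring
  · have h1 : (pr m i).val % 2 = 0 := by rw [pr_parity hme]; exact h
    rw [Gm_apply_odd h, Gm_apply_odd h, Gm_apply_even h1, pr_pr hme]
    simp only [Hvec, Matrix.cons_val_zero, Matrix.cons_val_one, Matrix.head_cons,
      map_add, map_sub, map_mul, map_neg, Complex.conj_conj, Pi.smul_apply,
      smul_eq_mul, Nv]
    ring

lemma Gm_invariant {m : ℕ} (a : ℂˣ) (v : Fin 2 → ℂ) (x : Fin m → ℂ) :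
    Gm m (((a : ℂ))⁻¹ • v) ((a : ℂ) • x) = Gm m v x := by
  have ha : (a : ℂ) ≠ 0 := Units.ne_zero a
  have hca : conj' (a : ℂ) ≠ 0 := by simp [ha]
  funext i
  by_cases h : i.val % 2 = 0 <;>
    [rw [Gm_apply_even h, Gm_apply_even h]; rw [Gm_apply_odd h, Gm_apply_odd h]] <;>
    · simp only [Pi.smul_apply, smul_eq_mul, map_mul, map_inv₀]
      field_simp

lemma Gm_Hvec_smul {m : ℕ} (u : ℂ) (v : Fin 2 → ℂ) (w : Fin m → ℂ) :
    Gm m (Hvec (u • v)) w = conj' u • Gm m (Hvec v) w := by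
  funext i
  by_cases h : i.val % 2 = 0 <;>
    · simp only [Pi.smul_apply, smul_eq_mul]
      first | simp only [Gm_apply_even h] | simp only [Gm_apply_odd h]
      simp only [Hvec, Pi.smul_apply, smul_eq_mul, Matrix.cons_val_zero,
        Matrix.cons_val_one, Matrix.head_cons, map_mul, map_neg, mul_neg, neg_mul]
      ring

lemma Nv_smul (u : ℂ) (v : Fin 2 → ℂ) : Nv (u • v) = (u * conj' u) * Nv v := by
  simp only [Nv, Pi.smul_apply, smul_eq_mul, map_mul]
  ring

lemma Gm_real_smul {m : ℕ} {z : ℂ} (hz : conj' z = z) (v : Fin 2 → ℂ) (x : Fin m → ℂ) :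
    Gm m v (z • x) = z • Gm m v x := by
  funext i
  by_cases h : i.val % 2 = 0 <;>
    · simp only [Pi.smul_apply, smul_eq_mul]
      first | simp only [Gm_apply_even h] | simp only [Gm_apply_odd h]
      simp only [Pi.smul_apply, smul_eq_mul, map_mul, hz]
      ring

lemma Gm_zero {m : ℕ} (v : Fin 2 → ℂ) : Gm m v (0 : Fin m → ℂ) = 0 := by
  funext i
  by_cases h : i.val % 2 = 0 <;>
    [rw [Gm_apply_even h]; rw [Gm_apply_odd h]] <;> simp

lemma Gm_continuous (m : ℕ) {X : Type*} [TopologicalSpace X] {v : X → Fin 2 → ℂ}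
    {x : X → Fin m → ℂ} (hv : Continuous v) (hx : Continuous x) :
    Continuous fun p => Gm m (v p) (x p) := by
  apply continuous_pi
  intro i
  simp only [Gm, starRingEnd_apply]
  split_ifs with h
  · exact (((continuous_apply (0 : Fin 2)).comp hv).mul ((continuous_apply i).comp hx)).add
      ((continuous_star.comp ((continuous_apply (1 : Fin 2)).comp hv)).mul
        (continuous_star.comp ((continuous_apply (pr m i)).comp hx)))
  · exact (((continuous_apply (0 : Fin 2)).comp hv).mul ((continuous_apply i).comp hx)).sub
      ((continuous_star.comp ((continuous_apply (1 : Fin 2)).comp hv)).mul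
        (continuous_star.comp ((continuous_apply (pr m i)).comp hx)))

lemma Hvec_continuous {X : Type*} [TopologicalSpace X] {v : X → Fin 2 → ℂ}
    (hv : Continuous v) : Continuous fun p => Hvec (v p) := by
  apply continuous_pi
  intro i
  fin_cases i
  · exact continuous_star.comp ((continuous_apply (0 : Fin 2)).comp hv)
  · exact ((continuous_apply (1 : Fin 2)).comp hv).neg

lemma Nv_continuous {X : Type*} [TopologicalSpace X] {v : X → Fin 2 → ℂ}
    (hv : Continuous v) : Continuous fun p => Nv (v p) := by
  simp only [Nv, starRingEnd_apply]
  exact (((continuous_apply (0 : Fin 2)).comp hv).mul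
      (continuous_star.comp ((continuous_apply (0 : Fin 2)).comp hv))).add
    (((continuous_apply (1 : Fin 2)).comp hv).mul
      (continuous_star.comp ((continuous_apply (1 : Fin 2)).comp hv)))


lemma Gm_ne_zero {m : ℕ} (hme : Even m) {v : Fin 2 → ℂ} {x : Fin m → ℂ}
    (hv : v ≠ 0) (hx : x ≠ 0) : Gm m v x ≠ 0 := by
  intro h
  have hA := Gm_Hvec_Gm hme v x
  rw [h, Gm_zero] at hA
  exact smul_ne_zero (Nv_ne_zero hv) hx hA.symm

/-- The forward map. -/
noncomputable def fmap (m : ℕ) (hme : Even m) (p : NZ 2 × NZ m) :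
    Projectivization ℂ (Fin 2 → ℂ) × NZ m :=
  (Projectivization.mk ℂ (p.1 : Fin 2 → ℂ) p.1.2,
    ⟨Gm m p.1 p.2, Gm_ne_zero hme p.1.2 p.2.2⟩)

/-- The (curried, unquotiented) inverse map. -/
noncomputable def gmap (m : ℕ) (hme : Even m) (v : NZ 2) (w : NZ m) : Quot (diagRel m) :=
  Quot.mk _ (v, ⟨(Nv (v : Fin 2 → ℂ))⁻¹ • Gm m (Hvec (v : Fin 2 → ℂ)) (w : Fin m → ℂ),
    smul_ne_zero (inv_ne_zero (Nv_ne_zero v.2))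
      (Gm_ne_zero hme (Hvec_ne_zero v.2) w.2)⟩)

lemma fmap_rel {m : ℕ} (hme : Even m) :
    ∀ p q, diagRel m p q → fmap m hme p = fmap m hme q := by
  rintro ⟨⟨v, hv⟩, ⟨x, hx⟩⟩ ⟨⟨v', hv'⟩, ⟨x', hx'⟩⟩ ⟨a, h1, h2⟩
  simp only at h1 h2
  have hval : ((a⁻¹ : ℂˣ) : ℂ) = ((a : ℂ))⁻¹ := Units.val_inv_eq_inv_val a
  have hfst : Projectivization.mk ℂ v hv = Projectivization.mk ℂ v' hv' := by
    rw [Projectivization.mk_eq_mk_iff]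
    exact ⟨a, by rw [h1, hval, Units.smul_def, smul_inv_smul₀ (Units.ne_zero a)]⟩
  have hsnd : Gm m v x = Gm m v' x' := by
    rw [h1, h2, hval, Gm_invariant]
  exact Prod.ext hfst (Subtype.ext hsnd)

lemma gmap_rel {m : ℕ} (hme : Even m) (w : NZ m) :
    ∀ a b : NZ 2, (projectivizationSetoid ℂ (Fin 2 → ℂ)).r a b →
      gmap m hme a w = gmap m hme b w := by
  intro a b hab
  have hab' : (a : Fin 2 → ℂ) ∈ MulAction.orbit ℂˣ (b : Fin 2 → ℂ) := hab
  obtain ⟨u, hu⟩ := hab'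
  have hu0 : (u : ℂ) ≠ 0 := Units.ne_zero u
  have hcu : conj' (u : ℂ) ≠ 0 := by simp [hu0]
  have hNb : Nv (b : Fin 2 → ℂ) ≠ 0 := Nv_ne_zero b.2
  have hu' : (a : Fin 2 → ℂ) = (u : ℂ) • (b : Fin 2 → ℂ) := by
    rw [← hu]; rfl
  have h2 : (Nv (a : Fin 2 → ℂ))⁻¹ • Gm m (Hvec (a : Fin 2 → ℂ)) (w : Fin m → ℂ)
      = ((u⁻¹ : ℂˣ) : ℂ) •
        ((Nv (b : Fin 2 → ℂ))⁻¹ • Gm m (Hvec (b : Fin 2 → ℂ)) (w : Fin m → ℂ)) := by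
    rw [hu', Nv_smul, Gm_Hvec_smul, smul_smul, smul_smul, Units.val_inv_eq_inv_val]
    congr 1
    field_simp
  exact (Quot.sound ⟨u⁻¹, by simpa [inv_inv] using hu', h2⟩).symm

/-- The descended forward map. -/
noncomputable def phimap (m : ℕ) (hme : Even m) :
    Quot (diagRel m) → Projectivization ℂ (Fin 2 → ℂ) × NZ m :=
  Quot.lift (fmap m hme) (fmap_rel hme)

/-- The descended inverse map. -/
noncomputable def psimap (m : ℕ) (hme : Even m) :
    Projectivization ℂ (Fin 2 → ℂ) × NZ m → Quot (diagRel m) := fun pw =>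
  Quotient.lift (fun v => gmap m hme v pw.2) (gmap_rel hme pw.2) pw.1

end Aux

section Main

open Complex

local notation "conj'" => (starRingEnd ℂ)

/-- For `m` a positive even integer, the quotient of `(ℂ² ∖ {0}) × (ℂᵐ ∖ {0})` by the
diagonal `ℂ*`-action `a • (v, x) = (a⁻¹ v, a x)` is homeomorphic to
`ℙ¹(ℂ) × (ℂᵐ ∖ {0})`. -/
theorem quotient_homeomorph_proj_line_prod (m : ℕ) (hm : 0 < m) (hme : Even m) :
    Nonempty (Quot (diagRel m) ≃ₜ Projectivization ℂ (Fin 2 → ℂ) × NZ m) := by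
  classical
  -- the two maps are inverse to each other
  have linv : ∀ q : Quot (diagRel m), psimap m hme (phimap m hme q) = q := by
    intro q
    induction q using Quot.ind with
    | mk p =>
      rcases p with ⟨v, x⟩
      have hx2 : (Nv (v : Fin 2 → ℂ))⁻¹ •
          Gm m (Hvec (v : Fin 2 → ℂ)) (Gm m (v : Fin 2 → ℂ) (x : Fin m → ℂ))
          = (x : Fin m → ℂ) := by
        rw [Gm_Hvec_Gm hme, inv_smul_smul₀ (Nv_ne_zero v.2)]
      have h3 : (⟨(Nv (v : Fin 2 → ℂ))⁻¹ •
          Gm m (Hvec (v : Fin 2 → ℂ)) (Gm m (v : Fin 2 → ℂ) (x : Fin m → ℂ)),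
          smul_ne_zero (inv_ne_zero (Nv_ne_zero v.2))
            (Gm_ne_zero hme (Hvec_ne_zero v.2) (Gm_ne_zero hme v.2 x.2))⟩ : NZ m)
          = x := Subtype.ext hx2
      exact congrArg (fun y => Quot.mk (diagRel m) (v, y)) h3
  have rinv : ∀ pw : Projectivization ℂ (Fin 2 → ℂ) × NZ m,
      phimap m hme (psimap m hme pw) = pw := by
    rintro ⟨p, w⟩
    induction p using Projectivization.ind with
    | h v hv =>
      have hB := Gm_Hvec_Gm hme (Hvec v) (w : Fin m → ℂ)
      rw [Hvec_Hvec, Nv_Hvec] at hB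
      have hz : conj' ((Nv v)⁻¹) = (Nv v)⁻¹ := by rw [map_inv₀, Nv_conj]
      have hval : Gm m v ((Nv v)⁻¹ • Gm m (Hvec v) (w : Fin m → ℂ)) = (w : Fin m → ℂ) := by
        rw [Gm_real_smul hz, hB, inv_smul_smul₀ (Nv_ne_zero hv)]
      exact congrArg (fun y => (Projectivization.mk ℂ v hv, y)) (Subtype.ext hval)
  -- continuity of φ
  have hcont_f : Continuous (fmap m hme) := by
    apply Continuous.prodMk
    · exact continuous_quot_mk.comp continuous_fst
    · exact Continuous.subtype_mk
        (Gm_continuous m (continuous_subtype_val.comp continuous_fst)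
          (continuous_subtype_val.comp continuous_snd)) _
  have hcont_φ : Continuous (phimap m hme) := continuous_quot_lift (fmap_rel hme) hcont_f
  -- the projectivization quotient map is an open quotient map
  have hoq : IsOpenQuotientMap
      (Quotient.mk (projectivizationSetoid ℂ (Fin 2 → ℂ)) :
        NZ 2 → Projectivization ℂ (Fin 2 → ℂ)) := by
    refine ⟨fun q => Quot.exists_rep q, continuous_quot_mk, ?_⟩
    intro U hU
    have hopen : IsOpen ((Quotient.mk (projectivizationSetoid ℂ (Fin 2 → ℂ))) ⁻¹'
        ((Quotient.mk (projectivizationSetoid ℂ (Fin 2 → ℂ))) '' U)) := by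
      have hset : (Quotient.mk (projectivizationSetoid ℂ (Fin 2 → ℂ))) ⁻¹'
          ((Quotient.mk (projectivizationSetoid ℂ (Fin 2 → ℂ))) '' U)
          = ⋃ u : ℂˣ, (fun x : NZ 2 =>
              (⟨(u : ℂ) • (x : Fin 2 → ℂ), smul_ne_zero (Units.ne_zero u) x.2⟩ : NZ 2)) ⁻¹' U := by
        ext x
        simp only [Set.mem_preimage, Set.mem_image, Set.mem_iUnion]
        constructor
        · rintro ⟨y, hyU, hy⟩
          have hyx' : (y : Fin 2 → ℂ) ∈ MulAction.orbit ℂˣ (x : Fin 2 → ℂ) :=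
            Quotient.exact hy
          obtain ⟨u, hu⟩ := hyx'
          refine ⟨u, ?_⟩
          have : (⟨(u : ℂ) • (x : Fin 2 → ℂ), smul_ne_zero (Units.ne_zero u) x.2⟩ : NZ 2)
              = y := Subtype.ext (by rw [← hu]; rfl)
          rw [this]
          exact hyU
        · rintro ⟨u, hu⟩
          refine ⟨_, hu, Quotient.sound ?_⟩
          exact ⟨u, rfl⟩
      rw [hset]
      exact isOpen_iUnion fun u =>
        ((Continuous.subtype_mk ((continuous_subtype_val.const_smul (u : ℂ))) _).isOpen_preimage U hU)
    exact isOpen_coinduced.mpr hopen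
  -- continuity of ψ
  have hprod : IsOpenQuotientMap (Prod.map
      (Quotient.mk (projectivizationSetoid ℂ (Fin 2 → ℂ))) (id : NZ m → NZ m)) :=
    hoq.prodMap IsOpenQuotientMap.id
  have hcont_ψ : Continuous (psimap m hme) := by
    apply hprod.isQuotientMap.continuous_iff.mpr
    have heq : (psimap m hme ∘ Prod.map (Quotient.mk (projectivizationSetoid ℂ (Fin 2 → ℂ))) id)
        = fun p : NZ 2 × NZ m => gmap m hme p.1 p.2 := rfl
    change Continuous (fun p : NZ 2 × NZ m => gmap m hme p.1 p.2)
    apply continuous_quot_mk.comp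
    apply Continuous.prodMk continuous_fst
    apply Continuous.subtype_mk
    apply Continuous.fun_smul
    · exact Continuous.inv₀ (Nv_continuous (continuous_subtype_val.comp continuous_fst))
        fun p => Nv_ne_zero p.1.2
    · exact Gm_continuous m
        (Hvec_continuous (continuous_subtype_val.comp continuous_fst))
        (continuous_subtype_val.comp continuous_snd)
  exact ⟨⟨⟨phimap m hme, psimap m hme, linv, rinv⟩, hcont_φ, hcont_ψ⟩⟩

end Main
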